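/- Let G* be a k-bound 𝔯-partite graph on nonempty finite probability spaces (Ω_i) that is (ε,h)-regular with witness function δ, let α ∈ (0,1), and for 1 ≤ i ≤ k set b_i* := max over indices J ⊆ 𝔯 with i ≤ |J| ≤ k of |C_J(G*)| and ρ_i := α/b_i*, and let η_i > 0 be reals with ε(i, b_i*) ≤ α · ρ_i · η_i. Call an edge e ∈ Ω_I with |I| = i exceptional iff d_{G*}(G*⟨e⟩) < ρ_i or δ(G*⟨e⟩) > ρ_i · η_i. Then for every nonempty index I ⊆ 𝔯 with |I| ≤ k, the probability that a random edge e ∈ Ω_I (components chosen independently according to the measures of the Ω_i) is exceptional is at most 2α. -/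
import Mathlib

open scoped Classical BigOperators

noncomputable section

/-- Probability weights on the vertex classes `Ω i`: each `Ω i` is a finite
probability space. -/
structure ProbWeight {ι : Type} (Ω : ι → Type) [∀ i, Fintype (Ω i)] where
  p : ∀ i, Ω i → ℝ
  nonneg : ∀ i x, 0 ≤ p i x
  sum_one : ∀ i, ∑ x, p i x = 1

/-- A `k`-bound colored `ι`-partite (hyper)graph on the vertex sets `Ω i`.
For each nonempty index `I ⊆ ι` with `|I| ≤ k`, every index-`I` edge
(an element of `Ω_I`, encoded as a dependent function on `I`) receives a color
from the color set `colorSet I`. -/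
structure PartGraph (ι : Type) [Fintype ι] [DecidableEq ι] (Ω : ι → Type)
    [∀ i, Fintype (Ω i)] (k : ℕ) where
  colorSet : Finset ι → Finset ℕ
  col : (I : Finset ι) → ((i : {x // x ∈ I}) → Ω i.1) → ℕ
  col_mem : ∀ (I : Finset ι), I.Nonempty → I.card ≤ k →
    ∀ e, col I e ∈ colorSet I

variable {ι : Type} [Fintype ι] [DecidableEq ι] {Ω : ι → Type} [∀ i, Fintype (Ω i)]
  {k : ℕ}

/-- `(b_i)`-colored: the index-`I` color set has at most `b_{|I|}` elements. -/
def PartGraph.Bounded (G : PartGraph ι Ω k) (b : ℕ → ℕ) : Prop :=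
  ∀ I : Finset ι, I.Nonempty → I.card ≤ k → (G.colorSet I).card ≤ b I.card

/-- Probability, over a random edge `e ∈ Ω_I` whose components are chosen
independently according to the measures of the `Ω i`, of the event `A`. -/
def probI (P : ProbWeight Ω) (I : Finset ι)
    (A : ((i : {x // x ∈ I}) → Ω i.1) → Prop) : ℝ :=
  ∑ e : (i : {x // x ∈ I}) → Ω i.1,
    (∏ i, P.p i.1 (e i)) * (if A e then 1 else 0)

/-- Expectation, over a random edge `e ∈ Ω_I`, of `f`. -/
def expI (P : ProbWeight Ω) (I : Finset ι)
    (f : ((i : {x // x ∈ I}) → Ω i.1) → ℝ) : ℝ :=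
  ∑ e : (i : {x // x ∈ I}) → Ω i.1, (∏ i, P.p i.1 (e i)) * f e

/-- The total color `G⟨e⟩` of an edge `e ∈ Ω_I`: the tuple of colors of all the
restrictions `e|_J` for nonempty `J ⊆ I` (encoded as a function on `Finset ι`,
with junk value `0` outside its domain). -/
def PartGraph.tc (G : PartGraph ι Ω k) (I : Finset ι)
    (e : (i : {x // x ∈ I}) → Ω i.1) : Finset ι → ℕ := fun J =>
  if h : J ⊆ I ∧ J.Nonempty then G.col J (fun j => e ⟨j.1, h.1 j.2⟩) else 0

/-- The relative density `d_G(c⃗)` of a total color `c⃗` of index `I`: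
the conditional probability that a random edge `e ∈ Ω_I` has color `c I`
given that all its proper restrictions have the colors prescribed by `c`. -/
def dens (G : PartGraph ι Ω k) (P : ProbWeight Ω) (I : Finset ι)
    (c : Finset ι → ℕ) : ℝ :=
  probI P I (fun e => G.col I e = c I ∧ ∀ J, J ⊂ I → J.Nonempty → G.tc I e J = c J) /
    probI P I (fun e => ∀ J, J ⊂ I → J.Nonempty → G.tc I e J = c J)

/-- A `k`-bound `ι`-partite (simplicial) complex: a finite vertex type `V`
partitioned into classes by `part`, a downward closed family `vis` of visible
edges (nonempty partitionwise subsets of `V` of size at most `k`), and a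
coloring `col` of the (visible) edges.  (Edges outside `vis` are invisible.) -/
structure PartComplex (ι : Type) [Fintype ι] [DecidableEq ι] (k : ℕ) where
  V : Type
  [fintypeV : Fintype V]
  [decEqV : DecidableEq V]
  part : V → ι
  vis : Finset (Finset V)
  vis_nonempty : ∀ e ∈ vis, e.Nonempty
  vis_card : ∀ e ∈ vis, e.card ≤ k
  vis_part : ∀ e ∈ vis, Set.InjOn part ↑e
  vis_down : ∀ e ∈ vis, ∀ f ⊆ e, f.Nonempty → f ∈ vis
  col : Finset V → ℕ

attribute [instance] PartComplex.fintypeV PartComplex.decEqV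

/-- The index-`I` edge of `G`'s vertex sets obtained as the image of an edge `e`
of a complex under a partitionwise map `φ`. -/
def PartComplex.edgeMap (B : PartComplex ι k) (Ω : ι → Type)
    (φ : ∀ v : B.V, Ω (B.part v)) (e : Finset B.V) :
    (i : {x // x ∈ e.image B.part}) → Ω i.1 := fun i =>
  cast (congrArg Ω (Finset.mem_image.mp i.2).choose_spec.2)
    (φ (Finset.mem_image.mp i.2).choose)

/-- The total color `B⟨e⟩` of an edge `e` of a complex `B` (under the standing
identification of colors of `B` with colors of an ambient graph). -/
def PartComplex.btc (B : PartComplex ι k) (e : Finset B.V) : Finset ι → ℕ := fun J =>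
  if J ⊆ e.image B.part ∧ J.Nonempty then
    B.col (e.filter (fun v => B.part v ∈ J)) else 0

/-- Probability that a random partitionwise map on the vertices of `B`
(each vertex sent independently according to the measure of its class)
satisfies `A`. -/
def probV (B : PartComplex ι k) (P : ProbWeight Ω)
    (A : (∀ v : B.V, Ω (B.part v)) → Prop) : ℝ :=
  ∑ φ : ∀ v : B.V, Ω (B.part v),
    (∏ v, P.p (B.part v) (φ v)) * (if A φ then 1 else 0)

/-- Conditional probability of `A` given `C`, for a random partitionwise map. -/
def condProbV (B : PartComplex ι k) (P : ProbWeight Ω)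
    (A C : (∀ v : B.V, Ω (B.part v)) → Prop) : ℝ :=
  probV B P (fun φ => A φ ∧ C φ) / probV B P C

/-- Conditional expectation of `f` given `C`, for a random partitionwise map. -/
def condExpV (B : PartComplex ι k) (P : ProbWeight Ω)
    (f : (∀ v : B.V, Ω (B.part v)) → ℝ)
    (C : (∀ v : B.V, Ω (B.part v)) → Prop) : ℝ :=
  (∑ φ : ∀ v : B.V, Ω (B.part v),
    (∏ v, P.p (B.part v) (φ v)) * (if C φ then f φ else 0)) / probV B P C

/-- `φ` embeds the complex `B` into `G`, as far as the edges in the family `F`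
are concerned: every edge of `F` is mapped to an edge of `G` of the same color. -/
def EmbedsF (B : PartComplex ι k) (G : PartGraph ι Ω k)
    (F : Finset (Finset B.V)) (φ : ∀ v : B.V, Ω (B.part v)) : Prop :=
  ∀ e ∈ F, G.col (e.image B.part) (B.edgeMap Ω φ e) = B.col e

/-- `B ↪_φ G` : all visible edges of `B` keep their colors. -/
def Embeds (B : PartComplex ι k) (G : PartGraph ι Ω k)
    (φ : ∀ v : B.V, Ω (B.part v)) : Prop :=
  EmbedsF B G B.vis φ

/-- `S ∈ 𝒮_{r,k,h,G}`: `S` has exactly `h` vertices in each of the vertex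
classes, and the visible colors of `S` are (identified with) colors of `G`
of the same index. -/
def memS (S : PartComplex ι k) (G : PartGraph ι Ω k) (h : ℕ) : Prop :=
  (∀ i : ι, (Finset.univ.filter (fun v => S.part v = i)).card = h) ∧
  ∀ e ∈ S.vis, S.col e ∈ G.colorSet (e.image S.part)

/-- `max_{J : |J| ≥ s} |C_J(G)|`. -/
def maxColors (G : PartGraph ι Ω k) (s : ℕ) : ℕ :=
  (Finset.univ.filter
    (fun J : Finset ι => J.Nonempty ∧ s ≤ J.card ∧ J.card ≤ k)).sup
    (fun J => (G.colorSet J).card)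

/-- `G` is `(ε,h)`-regular with witness function `δ` (assigning a nonnegative
real to each total color of `G`):
(i) for every complex `S ∈ 𝒮_{k,h,G}`, the probability that a random
partitionwise map embeds `S` in `G` is `∏_{e ∈ 𝕍(S)} (d_G(S⟨e⟩) ±̇ δ(S⟨e⟩))`;
(ii) for every index `I`, `𝔼_{e ∈ Ω_I} δ(G⟨e⟩) ≤ ε(|I|, max_{|J| ≥ |I|} |C_J(G)|)`. -/
def IsRegularWitness (G : PartGraph ι Ω k) (P : ProbWeight Ω)
    (ε : ℕ → ℕ → ℝ) (h : ℕ)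
    (δ : Finset ι → (Finset ι → ℕ) → ℝ) : Prop :=
  (∀ I c, 0 ≤ δ I c) ∧
  (∀ S : PartComplex ι k, memS S G h →
    ∃ c : Finset S.V → ℝ,
      probV S P (fun φ => Embeds S G φ) = ∏ e ∈ S.vis, c e ∧
      ∀ e ∈ S.vis,
        max 0 (dens G P (e.image S.part) (S.btc e) - δ (e.image S.part) (S.btc e))
          ≤ c e ∧
        c e ≤ min 1 (dens G P (e.image S.part) (S.btc e) +
          δ (e.image S.part) (S.btc e))) ∧
  (∀ I : Finset ι, I.Nonempty → I.card ≤ k →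
    expI P I (fun e => δ I (G.tc I e)) ≤ ε I.card (maxColors G I.card))

/-- `G` is `(ε,h)`-regular. -/
def IsEpsRegular (G : PartGraph ι Ω k) (P : ProbWeight Ω)
    (ε : ℕ → ℕ → ℝ) (h : ℕ) : Prop :=
  ∃ δ, IsRegularWitness G P ε h δ

/-- `G*` is a subdivision of `G`: size-`k` edges keep their colors, and the
coloring of smaller edges refines that of `G`. -/
def IsSubdivision (G Gs : PartGraph ι Ω k) : Prop :=
  (∀ I : Finset ι, I.card = k → ∀ e, Gs.col I e = G.col I e) ∧
  (∀ I : Finset ι, I.Nonempty → I.card < k →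
    ∀ e e', Gs.col I e = Gs.col I e' → G.col I e = G.col I e')

end

section AuxLemmas

variable {ι : Type} [Fintype ι] [DecidableEq ι] {Ω : ι → Type} [∀ i, Fintype (Ω i)]
  {k : ℕ}

lemma probI_nonneg (P : ProbWeight Ω) (I : Finset ι)
    (A : ((i : {x // x ∈ I}) → Ω i.1) → Prop) : 0 ≤ probI P I A := by
  refine Finset.sum_nonneg fun e _ => mul_nonneg ?_ ?_
  · exact Finset.prod_nonneg fun i _ => P.nonneg _ _
  · split <;> norm_num

lemma probI_mono (P : ProbWeight Ω) (I : Finset ι)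
    {A B : ((i : {x // x ∈ I}) → Ω i.1) → Prop} (hAB : ∀ e, A e → B e) :
    probI P I A ≤ probI P I B := by
  refine Finset.sum_le_sum fun e _ => ?_
  have hw : 0 ≤ ∏ i, P.p i.1 (e i) := Finset.prod_nonneg fun i _ => P.nonneg _ _
  by_cases hA : A e
  · simp [hA, hAB e hA]
  · simp [hA]
    split <;> [exact hw; exact le_rfl]

lemma probI_congr (P : ProbWeight Ω) (I : Finset ι)
    {A B : ((i : {x // x ∈ I}) → Ω i.1) → Prop} (hAB : ∀ e, A e ↔ B e) :
    probI P I A = probI P I B := by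
  unfold probI
  refine Finset.sum_congr rfl fun e _ => ?_
  simp [hAB e]

lemma sum_weights (P : ProbWeight Ω) (I : Finset ι) :
    ∑ e : (i : {x // x ∈ I}) → Ω i.1, ∏ i, P.p i.1 (e i) = 1 := by
  have h1 : ∑ e ∈ Fintype.piFinset (fun _ : {x // x ∈ I} => (Finset.univ : Finset (Ω _))),
      ∏ i, P.p i.1 (e i) = ∏ i : {x // x ∈ I}, ∑ x, P.p i.1 x :=
    (Finset.prod_univ_sum _ _).symm
  rw [Fintype.piFinset_univ] at h1
  rw [h1]
  simp [P.sum_one]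

lemma tc_self (G : PartGraph ι Ω k) (I : Finset ι) (hI : I.Nonempty)
    (e : (i : {x // x ∈ I}) → Ω i.1) : G.tc I e I = G.col I e := by
  unfold PartGraph.tc
  rw [dif_pos ⟨Finset.Subset.refl I, hI⟩]

lemma tc_junk (G : PartGraph ι Ω k) (I : Finset ι)
    (e : (i : {x // x ∈ I}) → Ω i.1) (J : Finset ι)
    (hJ : ¬(J ⊆ I ∧ J.Nonempty)) : G.tc I e J = 0 := by
  unfold PartGraph.tc
  rw [dif_neg hJ]

lemma probI_or_le (P : ProbWeight Ω) (I : Finset ι)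
    (A B : ((i : {x // x ∈ I}) → Ω i.1) → Prop) :
    probI P I (fun e => A e ∨ B e) ≤ probI P I A + probI P I B := by
  unfold probI
  rw [← Finset.sum_add_distrib]
  refine Finset.sum_le_sum fun e _ => ?_
  have hw : 0 ≤ ∏ i, P.p i.1 (e i) := Finset.prod_nonneg fun i _ => P.nonneg _ _
  beta_reduce
  by_cases hA : A e <;> by_cases hB : B e
  · rw [if_pos (Or.inl hA), if_pos hA, if_pos hB]; linarith
  · rw [if_pos (Or.inl hA), if_pos hA, if_neg hB]; linarith
  · rw [if_pos (Or.inr hB), if_neg hA, if_pos hB]; linarith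
  · rw [if_neg (by tauto : ¬(A e ∨ B e)), if_neg hA, if_neg hB]; linarith

lemma probI_markov (P : ProbWeight Ω) (I : Finset ι)
    (f : ((i : {x // x ∈ I}) → Ω i.1) → ℝ) (t : ℝ) (ht : 0 < t)
    (hf : ∀ e, 0 ≤ f e) :
    probI P I (fun e => f e > t) * t ≤ expI P I f := by
  unfold probI expI
  rw [Finset.sum_mul]
  refine Finset.sum_le_sum fun e _ => ?_
  have hw : 0 ≤ ∏ i, P.p i.1 (e i) := Finset.prod_nonneg fun i _ => P.nonneg _ _
  beta_reduce
  by_cases hc : f e > t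
  · rw [if_pos hc, mul_one]
    exact mul_le_mul_of_nonneg_left (le_of_lt hc) hw
  · rw [if_neg hc, mul_zero, zero_mul]
    exact mul_nonneg hw (hf e)

end AuxLemmas

set_option maxHeartbeats 1000000 in
/-- **Exceptional edges are rare.**  Let `G*` be `(ε,h)`-regular with witness
`δ`, let `α ∈ (0,1)`, `b_i* = max_{i ≤ |J| ≤ k} |C_J(G*)|`, `ρ_i = α / b_i*`,
and let `η_i > 0` satisfy `ε(i, b_i*) ≤ α · ρ_i · η_i`.  Call `e ∈ Ω_I`
exceptional iff `d_{G*}(G*⟨e⟩) < ρ_{|I|}` or `δ(G*⟨e⟩) > ρ_{|I|}·η_{|I|}`.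
Then for every index `I` the probability that a random edge of `Ω_I` is
exceptional is at most `2α`. -/
theorem exceptional_edges_rare
    (k : ℕ) (hk : 0 < k)
    (ι : Type) [Fintype ι] [DecidableEq ι]
    (Ω : ι → Type) [∀ i, Fintype (Ω i)] [∀ i, Nonempty (Ω i)]
    (P : ProbWeight Ω) (Gs : PartGraph ι Ω k)
    (ε : ℕ → ℕ → ℝ) (h : ℕ) (hh : 0 < h)
    (δ : Finset ι → (Finset ι → ℕ) → ℝ)
    (hreg : IsRegularWitness Gs P ε h δ)
    (α : ℝ) (hα : α ∈ Set.Ioo (0:ℝ) 1)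
    (bstar : ℕ → ℕ) (hbstar : ∀ i, bstar i = maxColors Gs i)
    (ρ : ℕ → ℝ) (hρ : ∀ i, ρ i = α / (bstar i : ℝ))
    (η : ℕ → ℝ) (hη : ∀ i, 1 ≤ i → i ≤ k → 0 < η i)
    (hεη : ∀ i, 1 ≤ i → i ≤ k → ε i (bstar i) ≤ α * ρ i * η i) :
    ∀ I : Finset ι, I.Nonempty → I.card ≤ k →
      probI P I (fun e =>
          dens Gs P I (Gs.tc I e) < ρ I.card ∨
          δ I (Gs.tc I e) > ρ I.card * η I.card) ≤ 2 * α := by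
  obtain ⟨hδ0, hSreg, hexp⟩ := hreg
  obtain ⟨hα0, hα1⟩ := hα
  intro I hI hIk
  have hi1 : 1 ≤ I.card := hI.card_pos
  obtain ⟨e0⟩ : Nonempty ((i : {x // x ∈ I}) → Ω i.1) := inferInstance
  have hcol0 : Gs.col I e0 ∈ Gs.colorSet I := Gs.col_mem I hI hIk e0
  have hcs1 : 1 ≤ (Gs.colorSet I).card := Finset.card_pos.mpr ⟨_, hcol0⟩
  have hble : (Gs.colorSet I).card ≤ bstar I.card := by
    rw [hbstar]
    exact Finset.le_sup (f := fun J => (Gs.colorSet J).card)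
      (Finset.mem_filter.mpr ⟨Finset.mem_univ _, hI, le_rfl, hIk⟩)
  have hb1 : 1 ≤ bstar I.card := le_trans hcs1 hble
  have hbpos : (0:ℝ) < (bstar I.card : ℝ) := by exact_mod_cast hb1
  have hρpos : 0 < ρ I.card := by rw [hρ]; positivity
  have hηpos : 0 < η I.card := hη _ hi1 hIk
  have htpos : 0 < ρ I.card * η I.card := mul_pos hρpos hηpos
  have hwnn : ∀ e : (i : {x // x ∈ I}) → Ω i.1, 0 ≤ ∏ i, P.p i.1 (e i) :=
    fun e => Finset.prod_nonneg fun i _ => P.nonneg _ _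
  -- split into the two events
  have hsplit : probI P I (fun e =>
        dens Gs P I (Gs.tc I e) < ρ I.card ∨
        δ I (Gs.tc I e) > ρ I.card * η I.card)
      ≤ probI P I (fun e => dens Gs P I (Gs.tc I e) < ρ I.card)
        + probI P I (fun e => δ I (Gs.tc I e) > ρ I.card * η I.card) :=
    probI_or_le P I _ _
  -- Part B : Markov
  have hB : probI P I (fun e => δ I (Gs.tc I e) > ρ I.card * η I.card) ≤ α := by
    have hM : probI P I (fun e => δ I (Gs.tc I e) > ρ I.card * η I.card)
        * (ρ I.card * η I.card) ≤ expI P I (fun e => δ I (Gs.tc I e)) :=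
      probI_markov P I _ _ htpos (fun e => hδ0 _ _)
    have hε : expI P I (fun e => δ I (Gs.tc I e)) ≤ α * (ρ I.card * η I.card) := by
      have h1 := hexp I hI hIk
      rw [← hbstar] at h1
      have h2 := hεη I.card hi1 hIk
      calc expI P I (fun e => δ I (Gs.tc I e)) ≤ ε I.card (bstar I.card) := h1
        _ ≤ α * ρ I.card * η I.card := h2
        _ = α * (ρ I.card * η I.card) := by ring
    have hle : probI P I (fun e => δ I (Gs.tc I e) > ρ I.card * η I.card)
        * (ρ I.card * η I.card) ≤ α * (ρ I.card * η I.card) := hM.trans hε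
    exact le_of_mul_le_mul_right hle htpos
  -- Part A : density rarely small
  have hA : probI P I (fun e => dens Gs P I (Gs.tc I e) < ρ I.card) ≤ α := by
    classical
    set T : Finset (Finset ι → ℕ) := Finset.univ.image (Gs.tc I) with hT
    set Bad : Finset (Finset ι → ℕ) :=
      T.filter (fun c => dens Gs P I c < ρ I.card) with hBad
    set DenL : (Finset ι → ℕ) → ℝ := fun c =>
      probI P I (fun e => ∀ J, J ⊂ I → J.Nonempty → Gs.tc I e J = c J) with hDenL
    have hDnn : ∀ c, 0 ≤ DenL c := fun c => probI_nonneg _ _ _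
    -- step 1 : decompose by total color
    have step1 : probI P I (fun e => dens Gs P I (Gs.tc I e) < ρ I.card)
        = ∑ c ∈ Bad, probI P I (fun e => Gs.tc I e = c) := by
      simp only [probI]
      rw [Finset.sum_comm]
      refine Finset.sum_congr rfl fun e _ => ?_
      rw [← Finset.mul_sum]
      congr 1
      have hmem : Gs.tc I e ∈ T := Finset.mem_image_of_mem _ (Finset.mem_univ e)
      by_cases hd : dens Gs P I (Gs.tc I e) < ρ I.card
      · have hsingle := Finset.sum_eq_single_of_mem (s := Bad)
          (f := fun c => @ite ℝ (Gs.tc I e = c) (Classical.propDecidable _) (1:ℝ) 0) (Gs.tc I e)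
          (Finset.mem_filter.mpr ⟨hmem, hd⟩)
          (fun c _ hne => if_neg (fun hEq : Gs.tc I e = c => hne hEq.symm))
        beta_reduce at hsingle
        rw [if_pos rfl] at hsingle
        rw [if_pos hd]
        exact hsingle.symm
      · rw [if_neg hd, eq_comm]
        refine Finset.sum_eq_zero fun c hc => ?_
        refine if_neg fun hEq : Gs.tc I e = c => hd ?_
        have := (Finset.mem_filter.mp hc).2
        rwa [← hEq] at this
    -- step 2 : each bad color contributes at most ρ * DenL c
    have step2 : ∀ c ∈ Bad, probI P I (fun e => Gs.tc I e = c) ≤ ρ I.card * DenL c := by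
      intro c hc
      have hdc : dens Gs P I c < ρ I.card := (Finset.mem_filter.mp hc).2
      have hmono1 : probI P I (fun e => Gs.tc I e = c)
          ≤ probI P I (fun e => Gs.col I e = c I ∧
              ∀ J, J ⊂ I → J.Nonempty → Gs.tc I e J = c J) := by
        refine probI_mono P I fun e he => ?_
        constructor
        · rw [← he, tc_self Gs I hI]
        · intro J _ _; rw [← he]
      have hmono2 : probI P I (fun e => Gs.col I e = c I ∧
          ∀ J, J ⊂ I → J.Nonempty → Gs.tc I e J = c J) ≤ DenL c :=
        probI_mono P I fun e he => he.2
      by_cases hden : DenL c = 0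
      · have h0 : probI P I (fun e => Gs.tc I e = c) ≤ 0 := by
          refine le_trans (hmono1.trans hmono2) (le_of_eq hden)
        calc probI P I (fun e => Gs.tc I e = c) ≤ 0 := h0
          _ ≤ ρ I.card * DenL c := by rw [hden, mul_zero]
      · have hdenpos : 0 < DenL c := lt_of_le_of_ne (hDnn c) (Ne.symm hden)
        have hdef : dens Gs P I c = probI P I (fun e => Gs.col I e = c I ∧
            ∀ J, J ⊂ I → J.Nonempty → Gs.tc I e J = c J) / DenL c := rfl
        rw [hdef, div_lt_iff₀ hdenpos] at hdc
        exact (hmono1.trans (le_of_lt hdc))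
    -- step 3 : bound the sum
    have step3 : ∑ c ∈ Bad, probI P I (fun e => Gs.tc I e = c)
        ≤ ρ I.card * ∑ c ∈ T, DenL c := by
      calc ∑ c ∈ Bad, probI P I (fun e => Gs.tc I e = c)
          ≤ ∑ c ∈ Bad, ρ I.card * DenL c := Finset.sum_le_sum step2
        _ ≤ ∑ c ∈ T, ρ I.card * DenL c := by
            refine Finset.sum_le_sum_of_subset_of_nonneg (Finset.filter_subset _ _)
              fun c _ _ => mul_nonneg (le_of_lt hρpos) (hDnn c)
        _ = ρ I.card * ∑ c ∈ T, DenL c := by rw [Finset.mul_sum]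
    -- the lower-profile map
    set low : (Finset ι → ℕ) → (Finset ι → ℕ) :=
      fun c J => if J = I then 0 else c J with hlow
    have hDlow : ∀ c, DenL c = DenL (low c) := by
      intro c
      refine probI_congr P I fun e => ?_
      constructor
      · intro hcond J hJ hJne
        have hne : J ≠ I := Finset.ssubset_iff_subset_ne.mp hJ |>.2
        simp only [hlow, if_neg hne]
        exact hcond J hJ hJne
      · intro hcond J hJ hJne
        have hne : J ≠ I := Finset.ssubset_iff_subset_ne.mp hJ |>.2
        have := hcond J hJ hJne
        simpa only [hlow, if_neg hne] using this
    -- characterize elements of the image satisfying the condition for a fixed e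
    have huniq : ∀ (e : (i : {x // x ∈ I}) → Ω i.1) (L : Finset ι → ℕ),
        L ∈ T.image low →
        (∀ J, J ⊂ I → J.Nonempty → Gs.tc I e J = L J) → L = low (Gs.tc I e) := by
      intro e L hL hcond
      obtain ⟨c, hcT, rfl⟩ := Finset.mem_image.mp hL
      obtain ⟨e', _, rfl⟩ := Finset.mem_image.mp hcT
      funext J
      by_cases hJI : J = I
      · simp [hlow, hJI]
      · by_cases hJ : J ⊆ I ∧ J.Nonempty
        · have hss : J ⊂ I := Finset.ssubset_iff_subset_ne.mpr ⟨hJ.1, hJI⟩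
          have := hcond J hss hJ.2
          simp only [hlow, if_neg hJI] at this ⊢
          exact this.symm
        · simp only [hlow, if_neg hJI]
          rw [tc_junk Gs I e' J hJ, tc_junk Gs I e J hJ]
    -- sum of DenL over distinct lower profiles is at most 1
    have hsumL : ∑ L ∈ T.image low, DenL L ≤ 1 := by
      have h1 : ∑ L ∈ T.image low, DenL L
          ≤ ∑ e : (i : {x // x ∈ I}) → Ω i.1, ∏ i, P.p i.1 (e i) := by
        simp only [hDenL, probI]
        rw [Finset.sum_comm]
        refine Finset.sum_le_sum fun e _ => ?_
        have hw := hwnn e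
        rw [← Finset.mul_sum]
        have hsum1 : ∑ L ∈ T.image low,
            (@ite ℝ (∀ J, J ⊂ I → J.Nonempty → Gs.tc I e J = L J) (Classical.propDecidable _) (1:ℝ) 0) ≤ 1 := by
          have hstep : ∑ L ∈ T.image low,
              (@ite ℝ (∀ J, J ⊂ I → J.Nonempty → Gs.tc I e J = L J) (Classical.propDecidable _) (1:ℝ) 0)
              ≤ ∑ L ∈ T.image low, (if L = low (Gs.tc I e) then (1:ℝ) else 0) := by
            refine Finset.sum_le_sum fun L hL => ?_
            by_cases hcond : ∀ J, J ⊂ I → J.Nonempty → Gs.tc I e J = L J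
            · rw [if_pos hcond, if_pos (huniq e L hL hcond)]
            · rw [if_neg hcond]
              split <;> norm_num
          refine hstep.trans ?_
          by_cases hb : low (Gs.tc I e) ∈ T.image low
          · have hsingle := Finset.sum_eq_single_of_mem (s := T.image low)
              (f := fun L => if L = low (Gs.tc I e) then (1:ℝ) else 0)
              (low (Gs.tc I e)) hb (fun c _ hne => if_neg hne)
            beta_reduce at hsingle
            rw [hsingle, if_pos rfl]
          · rw [Finset.sum_eq_zero (fun c hc =>
              if_neg (fun hEq : c = low (Gs.tc I e) => hb (hEq ▸ hc)))]
            norm_num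
        have hfin := mul_le_mul_of_nonneg_left hsum1 hw
        rw [mul_one] at hfin
        exact hfin
      rw [sum_weights P I] at h1
      exact h1
    -- fiber cardinality bound
    have hfiber : ∀ L, (T.filter (fun c => low c = L)).card ≤ bstar I.card := by
      intro L
      have hinj : Set.InjOn (fun c : Finset ι → ℕ => c I)
          ↑(T.filter (fun c => low c = L)) := by
        intro c1 hc1 c2 hc2 hI12
        have h1 := (Finset.mem_filter.mp hc1).2
        have h2 := (Finset.mem_filter.mp hc2).2
        funext J
        by_cases hJI : J = I
        · rw [hJI]; exact hI12
        · have e1 : c1 J = L J := by rw [← h1]; simp [hlow, if_neg hJI]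
          have e2 : c2 J = L J := by rw [← h2]; simp [hlow, if_neg hJI]
          rw [e1, e2]
      have hmaps : ∀ c ∈ T.filter (fun c => low c = L),
          (fun c : Finset ι → ℕ => c I) c ∈ Gs.colorSet I := by
        intro c hc
        obtain ⟨e, _, rfl⟩ := Finset.mem_image.mp (Finset.mem_filter.mp hc).1
        show Gs.tc I e I ∈ Gs.colorSet I
        rw [tc_self Gs I hI]
        exact Gs.col_mem I hI hIk e
      calc (T.filter (fun c => low c = L)).card
          ≤ (Gs.colorSet I).card := Finset.card_le_card_of_injOn _ hmaps hinj
        _ ≤ bstar I.card := hble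
    -- sum over T of DenL ≤ bstar
    have hsumT : ∑ c ∈ T, DenL c ≤ (bstar I.card : ℝ) := by
      have hgrp : ∑ c ∈ T, DenL (low c)
          = ∑ L ∈ T.image low, ∑ c ∈ T.filter (fun c => low c = L), DenL (low c) :=
        (Finset.sum_fiberwise_of_maps_to
          (fun c hc => Finset.mem_image_of_mem low hc) _).symm
      calc ∑ c ∈ T, DenL c = ∑ c ∈ T, DenL (low c) :=
            Finset.sum_congr rfl fun c _ => hDlow c
        _ = ∑ L ∈ T.image low, ∑ c ∈ T.filter (fun c => low c = L), DenL (low c) := hgrp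
        _ = ∑ L ∈ T.image low, ((T.filter (fun c => low c = L)).card : ℝ) * DenL L := by
            refine Finset.sum_congr rfl fun L hL => ?_
            rw [Finset.sum_congr rfl (fun c hc => by
              rw [(Finset.mem_filter.mp hc).2]), Finset.sum_const, nsmul_eq_mul]
        _ ≤ ∑ L ∈ T.image low, (bstar I.card : ℝ) * DenL L := by
            refine Finset.sum_le_sum fun L _ => ?_
            refine mul_le_mul_of_nonneg_right ?_ (hDnn L)
            exact_mod_cast hfiber L
        _ = (bstar I.card : ℝ) * ∑ L ∈ T.image low, DenL L := by rw [Finset.mul_sum]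
        _ ≤ (bstar I.card : ℝ) * 1 :=
            mul_le_mul_of_nonneg_left hsumL (le_of_lt hbpos)
        _ = (bstar I.card : ℝ) := mul_one _
    calc probI P I (fun e => dens Gs P I (Gs.tc I e) < ρ I.card)
        = ∑ c ∈ Bad, probI P I (fun e => Gs.tc I e = c) := step1
      _ ≤ ρ I.card * ∑ c ∈ T, DenL c := step3
      _ ≤ ρ I.card * (bstar I.card : ℝ) :=
          mul_le_mul_of_nonneg_left hsumT (le_of_lt hρpos)
      _ = α := by rw [hρ]; field_simp
  calc probI P I (fun e =>
        dens Gs P I (Gs.tc I e) < ρ I.card ∨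
        δ I (Gs.tc I e) > ρ I.card * η I.card)
      ≤ probI P I (fun e => dens Gs P I (Gs.tc I e) < ρ I.card)
        + probI P I (fun e => δ I (Gs.tc I e) > ρ I.card * η I.card) := hsplit
    _ ≤ α + α := add_le_add hA hB
    _ = 2 * α := by ring
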